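/- For all nonnegative integers m and n, A_{1+2m}(n) := Σ_{k=1}^{n} C(2n, n−k) · k^(1+2m) satisfies A_{1+2m}(n) = (1/2) · C(2n, n) · Σ_{ℓ=0}^{m} (−1)^ℓ · ⟨n⟩_ℓ · ⟨n⟩_{ℓ+1} · σ_{m,ℓ}(n). -/

import Mathlib

open Finset

/-- Falling factorial `⟨x⟩_n = x(x-1)⋯(x-n+1)`. -/
noncomputable def ffact (x : ℝ) : ℕ → ℝ
  | 0 => 1
  | n + 1 => ffact x n * (x - n)

/-- `σ_{m,ℓ}(y)`: the complete homogeneous symmetric polynomial of degree `m - ℓ`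
evaluated at `(y-0)^2, (y-1)^2, …, (y-ℓ)^2`, i.e. the sum over weakly increasing
sequences `0 ≤ k_1 ≤ ⋯ ≤ k_{m-ℓ} ≤ ℓ` of `∏ i, (y - k_i)^2`. -/
noncomputable def csigma (m ℓ : ℕ) (y : ℝ) : ℝ :=
  ∑ k ∈ Finset.univ.filter (fun k : Fin (m - ℓ) → Fin (ℓ + 1) => Monotone k),
    ∏ i, (y - (k i : ℝ)) ^ 2

noncomputable def msum (d c : ℕ) (g : ℕ → ℝ) : ℝ :=
  ∑ k ∈ Finset.univ.filter (fun k : Fin d → Fin c => Monotone k), ∏ i, g (k i)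

lemma msum_zero (c : ℕ) (g : ℕ → ℝ) : msum 0 c g = 1 := by
  rw [msum, Finset.filter_true_of_mem (fun k _ => by intro a b h; exact a.elim0)]
  simp

lemma msum_one (d : ℕ) (g : ℕ → ℝ) : msum d 1 g = g 0 ^ d := by
  rw [msum, Finset.filter_true_of_mem
    (fun k _ => by intro a b h; exact le_of_eq (Subsingleton.elim _ _))]
  rw [Finset.sum_eq_single (fun _ => 0)]
  · simp [Finset.prod_const]
  · intro b _ hb; exact absurd (funext fun i => Subsingleton.elim _ _) hb
  · simp

lemma monotone_cons_zero {d c : ℕ} {k : Fin d → Fin (c + 1)} (hk : Monotone k) :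
    Monotone (Fin.cons 0 k : Fin (d + 1) → Fin (c + 1)) := by
  intro a b hab
  induction a using Fin.cases with
  | zero => simp [Fin.zero_le]
  | succ i =>
    induction b using Fin.cases with
    | zero =>
      exact absurd (Fin.le_zero_iff.mp hab) (Fin.succ_ne_zero i)
    | succ j =>
      simp only [Fin.cons_succ]
      exact hk (Fin.succ_le_succ_iff.mp hab)

lemma monotone_snoc_last {d c : ℕ} {k : Fin d → Fin (c + 1)} (hk : Monotone k) :
    Monotone (Fin.snoc k (Fin.last c) : Fin (d + 1) → Fin (c + 1)) := by
  intro a b hab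
  induction b using Fin.lastCases with
  | last => simp [Fin.snoc_last, Fin.le_last]
  | cast j =>
    induction a using Fin.lastCases with
    | last =>
      have := Fin.last_le_iff.mp hab
      rw [this]
    | cast i =>
      simp only [Fin.snoc_castSucc]
      exact hk (Fin.castSucc_le_castSucc_iff.mp hab)

/-- First-variable splitting: `h_{d+1}(x_0,…,x_c) = x_0 h_d(x_0,…,x_c) + h_{d+1}(x_1,…,x_c)`. -/
lemma msum_head (d c : ℕ) (g : ℕ → ℝ) :
    msum (d + 1) (c + 1) g = g 0 * msum d (c + 1) g + msum (d + 1) c (fun j => g (j + 1)) := by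
  rw [msum, ← Finset.sum_filter_add_sum_filter_not _ (fun k => k 0 = 0)]
  congr 1
  · -- k 0 = 0 branch
    rw [Finset.filter_filter, msum, Finset.mul_sum]
    refine Finset.sum_bij' (fun k _ => Fin.tail k) (fun k _ => Fin.cons 0 k) ?_ ?_ ?_ ?_ ?_
    · intro k hk
      simp only [Finset.mem_filter, Finset.mem_univ, true_and] at hk ⊢
      intro a b hab
      exact hk.1 (Fin.succ_le_succ_iff.mpr hab)
    · intro k hk
      simp only [Finset.mem_filter, Finset.mem_univ, true_and] at hk ⊢
      exact ⟨monotone_cons_zero hk, Fin.cons_zero _ _⟩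
    · intro k hk
      simp only [Finset.mem_filter, Finset.mem_univ, true_and] at hk
      show Fin.cons 0 (Fin.tail k) = k
      have h := Fin.cons_self_tail k
      rwa [hk.2] at h
    · intro k _
      exact Fin.tail_cons _ _
    · intro k hk
      simp only [Finset.mem_filter, Finset.mem_univ, true_and] at hk
      rw [Fin.prod_univ_succ, hk.2]
      simp [Fin.tail]
  · -- k 0 ≠ 0 branch
    rw [Finset.filter_filter, msum]
    refine Finset.sum_bij' (fun k hk => fun x => (⟨(k x : ℕ) - 1, by
        simp only [Finset.mem_filter, Finset.mem_univ, true_and] at hk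
        have h1 : k 0 ≤ k x := hk.1 (Fin.zero_le x)
        have h2 : (k 0 : ℕ) ≠ 0 := fun h => hk.2 (Fin.ext h)
        have := (k x).isLt
        have := Fin.le_iff_val_le_val.mp h1
        omega⟩ : Fin c))
      (fun k _ => fun x => (k x).succ) ?_ ?_ ?_ ?_ ?_
    · intro k hk
      simp only [Finset.mem_filter, Finset.mem_univ, true_and] at hk ⊢
      intro a b hab
      have := Fin.le_iff_val_le_val.mp (hk.1 hab)
      exact Fin.mk_le_mk.mpr (by omega)
    · intro k hk
      simp only [Finset.mem_filter, Finset.mem_univ, true_and] at hk ⊢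
      constructor
      · intro a b hab
        exact Fin.succ_le_succ_iff.mpr (hk hab)
      · intro h
        exact absurd (congrArg Fin.val h) (by simp)
    · intro k hk
      simp only [Finset.mem_filter, Finset.mem_univ, true_and] at hk
      funext x
      have h1 : k 0 ≤ k x := hk.1 (Fin.zero_le x)
      have h2 : (k 0 : ℕ) ≠ 0 := fun h => hk.2 (Fin.ext h)
      have := Fin.le_iff_val_le_val.mp h1
      apply Fin.ext
      simp [Fin.val_succ]
      omega
    · intro k _
      funext x
      apply Fin.ext
      simp
    · intro k hk
      apply Finset.prod_congr rfl
      intro x _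
      show g ((k x : ℕ)) = g ((k x : ℕ) - 1 + 1)
      simp only [Finset.mem_filter, Finset.mem_univ, true_and] at hk
      have h1 : k 0 ≤ k x := hk.1 (Fin.zero_le x)
      have h2 : (k 0 : ℕ) ≠ 0 := fun h => hk.2 (Fin.ext h)
      have := Fin.le_iff_val_le_val.mp h1
      congr 1
      omega

/-- Last-variable splitting: `h_{d+1}(x_0,…,x_c) = h_{d+1}(x_0,…,x_{c-1}) + x_c h_d(x_0,…,x_c)`. -/
lemma msum_last (d c : ℕ) (g : ℕ → ℝ) :
    msum (d + 1) (c + 1) g = msum (d + 1) c g + g c * msum d (c + 1) g := by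
  rw [msum, ← Finset.sum_filter_add_sum_filter_not _ (fun k => k (Fin.last d) = Fin.last c)]
  rw [add_comm]
  congr 1
  · -- k last < last c branch
    rw [Finset.filter_filter, msum]
    refine Finset.sum_bij' (fun k hk => fun x => (⟨(k x : ℕ), by
        simp only [Finset.mem_filter, Finset.mem_univ, true_and] at hk
        have h1 : k x ≤ k (Fin.last d) := hk.1 (Fin.le_last x)
        have h2 : (k (Fin.last d) : ℕ) ≠ c := fun h => hk.2 (Fin.ext (by simpa using h))
        have := (k (Fin.last d)).isLt
        have := Fin.le_iff_val_le_val.mp h1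
        omega⟩ : Fin c))
      (fun k _ => fun x => (k x).castSucc) ?_ ?_ ?_ ?_ ?_
    · intro k hk
      simp only [Finset.mem_filter, Finset.mem_univ, true_and] at hk ⊢
      intro a b hab
      exact Fin.mk_le_mk.mpr (Fin.le_iff_val_le_val.mp (hk.1 hab))
    · intro k hk
      simp only [Finset.mem_filter, Finset.mem_univ, true_and] at hk ⊢
      constructor
      · intro a b hab
        exact Fin.castSucc_le_castSucc_iff.mpr (hk hab)
      · intro h
        have := congrArg Fin.val h
        simp only [Fin.coe_castSucc, Fin.val_last] at this
        exact absurd this (Nat.ne_of_lt (k (Fin.last d)).isLt)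
    · intro k _
      funext x
      apply Fin.ext
      simp
    · intro k _
      funext x
      apply Fin.ext
      simp
    · intro k _
      apply Finset.prod_congr rfl
      intro x _
      rfl
  · -- k last = last c branch
    rw [Finset.filter_filter, msum, Finset.mul_sum]
    refine Finset.sum_bij' (fun k _ => Fin.init k) (fun k _ => Fin.snoc k (Fin.last c)) ?_ ?_ ?_ ?_ ?_
    · intro k hk
      simp only [Finset.mem_filter, Finset.mem_univ, true_and] at hk ⊢
      intro a b hab
      exact hk.1 (Fin.castSucc_le_castSucc_iff.mpr hab)
    · intro k hk
      simp only [Finset.mem_filter, Finset.mem_univ, true_and] at hk ⊢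
      exact ⟨monotone_snoc_last hk, Fin.snoc_last _ _⟩
    · intro k hk
      simp only [Finset.mem_filter, Finset.mem_univ, true_and] at hk
      show Fin.snoc (Fin.init k) (Fin.last c) = k
      have h := Fin.snoc_init_self k
      rwa [hk.2] at h
    · intro k _
      exact Fin.init_snoc _ _
    · intro k hk
      simp only [Finset.mem_filter, Finset.mem_univ, true_and] at hk
      rw [Fin.prod_univ_castSucc, hk.2]
      rw [mul_comm]
      show g ((Fin.last c : Fin (c+1)) : ℕ) * _ = _
      rw [Fin.val_last]
      simp [Fin.init]

lemma csigma_eq_msum (m ℓ : ℕ) (y : ℝ) :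
    csigma m ℓ y = msum (m - ℓ) (ℓ + 1) (fun j => (y - (j : ℝ)) ^ 2) := rfl

lemma csigma_self (m : ℕ) (y : ℝ) : csigma m m y = 1 := by
  rw [csigma_eq_msum, Nat.sub_self, msum_zero]

lemma csigma_zero (m : ℕ) (y : ℝ) : csigma m 0 y = (y ^ 2) ^ m := by
  rw [csigma_eq_msum, Nat.sub_zero, msum_one]
  norm_num

lemma csigma_rec_a (m ℓ : ℕ) (h : ℓ < m) (y : ℝ) :
    csigma (m + 1) (ℓ + 1) y =
      csigma m ℓ y + (y - ((ℓ : ℝ) + 1)) ^ 2 * csigma m (ℓ + 1) y := by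
  have h1 : (m + 1) - (ℓ + 1) = (m - ℓ - 1) + 1 := by omega
  have h2 : m - ℓ = (m - ℓ - 1) + 1 := by omega
  have h3 : m - (ℓ + 1) = m - ℓ - 1 := by omega
  rw [csigma_eq_msum, csigma_eq_msum, csigma_eq_msum, h1, h2, h3]
  simp only [Nat.add_sub_cancel]
  rw [msum_last (m - ℓ - 1) (ℓ + 1)]
  push_cast
  ring

lemma csigma_rec_b (m ℓ : ℕ) (h : ℓ < m) (y : ℝ) :
    csigma (m + 1) (ℓ + 1) y =
      y ^ 2 * csigma m (ℓ + 1) y + csigma m ℓ (y - 1) := by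
  have h1 : (m + 1) - (ℓ + 1) = (m - ℓ - 1) + 1 := by omega
  have h2 : m - ℓ = (m - ℓ - 1) + 1 := by omega
  have h3 : m - (ℓ + 1) = m - ℓ - 1 := by omega
  rw [csigma_eq_msum, csigma_eq_msum, csigma_eq_msum, h1, h2, h3]
  simp only [Nat.add_sub_cancel]
  rw [msum_head (m - ℓ - 1) (ℓ + 1)]
  have : (fun j : ℕ => ((y - 1) - (j : ℝ)) ^ 2) = (fun j : ℕ => (y - ((j + 1 : ℕ) : ℝ)) ^ 2) := by
    funext j; push_cast; ring
  rw [this]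
  norm_num

lemma csigma_shift (m ℓ : ℕ) (h : ℓ < m) (y : ℝ) :
    csigma m ℓ (y - 1) =
      csigma m ℓ y + ((y - ((ℓ : ℝ) + 1)) ^ 2 - y ^ 2) * csigma m (ℓ + 1) y := by
  have ha := csigma_rec_a m ℓ h y
  have hb := csigma_rec_b m ℓ h y
  nlinarith [ha, hb]

lemma ffact_succ (x : ℝ) (n : ℕ) : ffact x (n + 1) = ffact x n * (x - n) := rfl
lemma ffact_zero' (x : ℝ) : ffact x 0 = 1 := rfl
lemma ffact_one (x : ℝ) : ffact x 1 = x := by simp [ffact]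

lemma ffact_shift (y : ℝ) : ∀ ℓ : ℕ, y * ffact (y - 1) ℓ = ffact y (ℓ + 1) := by
  intro ℓ
  induction ℓ with
  | zero => simp [ffact]
  | succ n ih =>
    rw [ffact_succ, ffact_succ, ← ih]
    push_cast
    ring

lemma ffact_zero_eq_zero (ℓ : ℕ) : ffact 0 (ℓ + 1) = 0 := by
  induction ℓ with
  | zero => simp [ffact]
  | succ n ih => rw [ffact_succ, ih, zero_mul]

/-- `P_m(y)` summand. -/
noncomputable def pterm (m : ℕ) (y : ℝ) (ℓ : ℕ) : ℝ :=
  (-1 : ℝ) ^ ℓ * ffact y ℓ * ffact y (ℓ + 1) * csigma m ℓ y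

noncomputable def qterm (m : ℕ) (y : ℝ) (ℓ : ℕ) : ℝ :=
  (-1 : ℝ) ^ ℓ * (ffact y (ℓ + 1)) ^ 2 * csigma m ℓ y

noncomputable def Aterm (m : ℕ) (y : ℝ) (ℓ : ℕ) : ℝ :=
  (-1 : ℝ) ^ (ℓ + 1) * ffact y (ℓ + 1) * ffact y (ℓ + 2) * csigma m ℓ y

noncomputable def Bterm (m : ℕ) (y : ℝ) (ℓ : ℕ) : ℝ :=
  (-1 : ℝ) ^ (ℓ + 1) * ffact y (ℓ + 1) * ffact y (ℓ + 2) * (y - ((ℓ : ℝ) + 1)) ^ 2 *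
    csigma m (ℓ + 1) y

lemma claim1 (m : ℕ) (y : ℝ) :
    ∑ ℓ ∈ range (m + 2), pterm (m + 1) y ℓ = ∑ ℓ ∈ range (m + 1), qterm m y ℓ := by
  rw [Finset.sum_range_succ' (pterm (m + 1) y) (m + 1)]
  rw [Finset.sum_range_succ (fun ℓ => pterm (m + 1) y (ℓ + 1)) m]
  have hsplit : ∀ ℓ ∈ range m, pterm (m + 1) y (ℓ + 1) = Aterm m y ℓ + Bterm m y ℓ := by
    intro ℓ hℓ
    rw [Finset.mem_range] at hℓ
    rw [pterm, Aterm, Bterm, csigma_rec_a m ℓ hℓ y]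
    ring
  rw [Finset.sum_congr rfl hsplit, Finset.sum_add_distrib]
  have htop : pterm (m + 1) y (m + 1) = Aterm m y m := by
    rw [pterm, Aterm, csigma_self, csigma_self]
  rw [htop]
  -- RHS
  rw [Finset.sum_range_succ' (qterm m y) m]
  have hq : ∀ ℓ ∈ range m, qterm m y (ℓ + 1) = Aterm m y (ℓ + 1) + Bterm m y ℓ := by
    intro ℓ _
    rw [qterm, Aterm, Bterm]
    rw [show ℓ + 1 + 2 = (ℓ + 1 + 1) + 1 from rfl, ffact_succ y (ℓ + 1 + 1),
        show ℓ + 2 = (ℓ + 1) + 1 from rfl, ffact_succ y (ℓ + 1)]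
    push_cast
    ring
  rw [Finset.sum_congr rfl hq, Finset.sum_add_distrib]
  have hq0 : qterm m y 0 = pterm (m + 1) y 0 + Aterm m y 0 := by
    rw [qterm, pterm, Aterm, csigma_zero, csigma_zero]
    simp only [ffact_one, ffact_zero']
    rw [show (2 : ℕ) = 1 + 1 from rfl, ffact_succ y 1, ffact_one]
    push_cast
    ring
  rw [hq0]
  have h1 : ∑ x ∈ range m, Aterm m y x + Aterm m y m
      = ∑ x ∈ range m, Aterm m y (x + 1) + Aterm m y 0 := by
    rw [← Finset.sum_range_succ (Aterm m y) m, Finset.sum_range_succ' (Aterm m y) m]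
  linarith

noncomputable def Cterm (m : ℕ) (y : ℝ) (ℓ : ℕ) : ℝ :=
  (-1 : ℝ) ^ ℓ * ffact y (ℓ + 1) * ffact y (ℓ + 2) * csigma m ℓ y

noncomputable def Dterm (m : ℕ) (y : ℝ) (ℓ : ℕ) : ℝ :=
  (-1 : ℝ) ^ ℓ * ffact y (ℓ + 1) * ffact y (ℓ + 2) *
    ((y - ((ℓ : ℝ) + 1)) ^ 2 - y ^ 2) * csigma m (ℓ + 1) y

noncomputable def shterm (m : ℕ) (y : ℝ) (ℓ : ℕ) : ℝ :=
  (-1 : ℝ) ^ ℓ * ffact (y - 1) ℓ * ffact (y - 1) (ℓ + 1) * csigma m ℓ (y - 1)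

lemma claim2 (m : ℕ) (y : ℝ) :
    ∑ ℓ ∈ range (m + 1), qterm m y ℓ + y ^ 2 * ∑ ℓ ∈ range (m + 1), shterm m y ℓ =
      y ^ 2 * ∑ ℓ ∈ range (m + 1), pterm m y ℓ := by
  have hC : ∀ ℓ, y ^ 2 * shterm m y ℓ =
      (-1 : ℝ) ^ ℓ * ffact y (ℓ + 1) * ffact y (ℓ + 2) * csigma m ℓ (y - 1) := by
    intro ℓ
    have e1 : y * ffact (y - 1) ℓ = ffact y (ℓ + 1) := ffact_shift y ℓ
    have e2 : y * ffact (y - 1) (ℓ + 1) = ffact y (ℓ + 2) := ffact_shift y (ℓ + 1)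
    rw [shterm, ← e1, ← e2]
    ring
  have hsh : ∀ ℓ ∈ range m, y ^ 2 * shterm m y ℓ = Cterm m y ℓ + Dterm m y ℓ := by
    intro ℓ hℓ
    rw [Finset.mem_range] at hℓ
    rw [hC, csigma_shift m ℓ hℓ y, Cterm, Dterm]
    ring
  have hshtop : y ^ 2 * shterm m y m = Cterm m y m := by
    rw [hC, Cterm, csigma_self, csigma_self]
  have step1 : y ^ 2 * ∑ ℓ ∈ range (m + 1), shterm m y ℓ =
      ∑ ℓ ∈ range m, Cterm m y ℓ + ∑ ℓ ∈ range m, Dterm m y ℓ + Cterm m y m := by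
    rw [Finset.mul_sum, Finset.sum_range_succ, Finset.sum_congr rfl hsh, hshtop,
      Finset.sum_add_distrib]
  have hCswap : ∑ ℓ ∈ range m, Cterm m y ℓ + Cterm m y m =
      ∑ ℓ ∈ range m, Cterm m y (ℓ + 1) + Cterm m y 0 := by
    rw [← Finset.sum_range_succ (Cterm m y) m, Finset.sum_range_succ' (Cterm m y) m]
  have t1 : ∀ ℓ, qterm m y (ℓ + 1) + Cterm m y (ℓ + 1) + Dterm m y ℓ =
      y ^ 2 * pterm m y (ℓ + 1) := by
    intro ℓ
    rw [qterm, Cterm, Dterm, pterm]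
    rw [show ℓ + 1 + 2 = (ℓ + 1 + 1) + 1 from rfl, ffact_succ y (ℓ + 1 + 1),
        show ℓ + 2 = (ℓ + 1) + 1 from rfl, ffact_succ y (ℓ + 1)]
    push_cast
    ring
  have t0 : qterm m y 0 + Cterm m y 0 = y ^ 2 * pterm m y 0 := by
    rw [qterm, Cterm, pterm, csigma_zero]
    simp only [ffact_one, ffact_zero']
    rw [show (2 : ℕ) = 1 + 1 from rfl, ffact_succ y 1, ffact_one]
    push_cast
    ring
  have hsum1 : ∑ ℓ ∈ range m, (qterm m y (ℓ + 1) + Cterm m y (ℓ + 1) + Dterm m y ℓ) =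
      ∑ ℓ ∈ range m, y ^ 2 * pterm m y (ℓ + 1) :=
    Finset.sum_congr rfl (fun ℓ _ => t1 ℓ)
  rw [Finset.sum_add_distrib, Finset.sum_add_distrib] at hsum1
  rw [step1, Finset.sum_range_succ' (qterm m y) m, Finset.mul_sum,
    Finset.sum_range_succ' (fun ℓ => y ^ 2 * pterm m y ℓ) m]
  linarith [hsum1, hCswap, t0]

lemma P_rec (m : ℕ) (y : ℝ) :
    ∑ ℓ ∈ range (m + 2), pterm (m + 1) y ℓ =
      y ^ 2 * ∑ ℓ ∈ range (m + 1), pterm m y ℓ -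
        y ^ 2 * ∑ ℓ ∈ range (m + 1), shterm m y ℓ := by
  rw [claim1]
  linarith [claim2 m y]


lemma key_nat (N k : ℕ) (h2 : k ≤ N) :
    (N + 1 + k) * ((N + 1 - k) * ((2 * N + 2).choose (N + 1 - k))) =
      (2 * N + 2) * ((2 * N + 1) * ((2 * N).choose (N - k))) := by
  have e1 : (2 * N + 2) * ((2 * N + 1).choose (N - k)) =
      (2 * N + 2).choose (N + 1 - k) * (N + 1 - k) := by
    have h := Nat.add_one_mul_choose_eq (2 * N + 1) (N - k)
    rw [show N - k + 1 = N + 1 - k from by omega, show 2 * N + 1 + 1 = 2 * N + 2 from by omega] at h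
    exact h
  have e2 : (2 * N).choose (N - k) * (2 * N + 1) =
      (2 * N + 1).choose (N - k) * (N + 1 + k) := by
    have := Nat.choose_mul_succ_eq (2 * N) (N - k)
    have h : 2 * N + 1 - (N - k) = N + 1 + k := by omega
    rwa [h] at this
  calc (N + 1 + k) * ((N + 1 - k) * ((2 * N + 2).choose (N + 1 - k)))
      = (N + 1 + k) * ((2 * N + 2) * ((2 * N + 1).choose (N - k))) := by rw [e1]; ring
    _ = (2 * N + 2) * ((2 * N + 1).choose (N - k) * (N + 1 + k)) := by ring
    _ = (2 * N + 2) * ((2 * N).choose (N - k) * (2 * N + 1)) := by rw [← e2]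
    _ = (2 * N + 2) * ((2 * N + 1) * ((2 * N).choose (N - k))) := by ring

lemma key_real (N k : ℕ) (h2 : k ≤ N) :
    (((2 * N + 2).choose (N + 1 - k) : ℝ)) * (k : ℝ) ^ 2 =
      ((N : ℝ) + 1) ^ 2 * ((2 * N + 2).choose (N + 1 - k) : ℝ) -
        2 * ((N : ℝ) + 1) * (2 * (N : ℝ) + 1) * ((2 * N).choose (N - k) : ℝ) := by
  have h := key_nat N k h2
  have hcast : ((N + 1 + k : ℕ) : ℝ) * (((N + 1 - k : ℕ) : ℝ) * ((2 * N + 2).choose (N + 1 - k) : ℝ)) =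
      ((2 * N + 2 : ℕ) : ℝ) * (((2 * N + 1 : ℕ) : ℝ) * ((2 * N).choose (N - k) : ℝ)) := by
    exact_mod_cast congrArg (Nat.cast : ℕ → ℝ) h
  have hs : ((N + 1 - k : ℕ) : ℝ) = (N : ℝ) + 1 - (k : ℝ) := by
    have : k ≤ N + 1 := by omega
    push_cast [this]; ring
  rw [hs] at hcast
  push_cast at hcast
  nlinarith [hcast]

lemma sum_Icc_one_eq_range (n : ℕ) (f : ℕ → ℝ) :
    ∑ k ∈ Finset.Icc 1 n, f k = ∑ i ∈ Finset.range n, f (1 + i) := by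
  rw [← Finset.Ico_add_one_right_eq_Icc, Finset.sum_Ico_eq_sum_range]
  simp

lemma base_case (n : ℕ) :
    ∑ k ∈ Finset.Icc 1 n, (((2 * n).choose (n - k) : ℝ)) * (k : ℝ) =
      (1 / 2) * (((2 * n).choose n : ℝ)) * (n : ℝ) := by
  rcases n with _ | N
  · simp
  · set F : ℕ → ℝ := fun i => if i ≤ N then ((2 * N + 1).choose (N - i) : ℝ) else 0 with hF
    rw [sum_Icc_one_eq_range]
    have hterm : ∀ i ∈ Finset.range (N + 1),
        (((2 * (N + 1)).choose (N + 1 - (1 + i)) : ℝ)) * ((1 + i : ℕ) : ℝ) =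
          ((N : ℝ) + 1) * (F i - F (i + 1)) := by
      intro i hi
      rw [Finset.mem_range] at hi
      rw [show N + 1 - (1 + i) = N - i from by omega,
          show 2 * (N + 1) = 2 * N + 2 from by ring]
      rcases Nat.lt_or_ge i N with hiN | hiN
      · -- i < N
        have e1 : (2 * N + 2) * ((2 * N + 1).choose (N - i - 1)) =
            (2 * N + 1 + 1).choose (N - i - 1 + 1) * (N - i - 1 + 1) :=
          Nat.add_one_mul_choose_eq (2 * N + 1) (N - i - 1)
        rw [show N - i - 1 + 1 = N - i from by omega,
            show 2 * N + 1 + 1 = 2 * N + 2 from by omega] at e1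
        have e2 : (2 * N + 1).choose (N - i) * (2 * N + 1 + 1) =
            (2 * N + 1 + 1).choose (N - i) * (2 * N + 1 + 1 - (N - i)) :=
          Nat.choose_mul_succ_eq (2 * N + 1) (N - i)
        rw [show 2 * N + 1 + 1 = 2 * N + 2 from by omega,
            show 2 * N + 1 + 1 - (N - i) = N + 2 + i from by omega] at e2
        have hF1 : F i = ((2 * N + 1).choose (N - i) : ℝ) := by
          rw [hF]; simp only [if_pos (by omega : i ≤ N)]
        have hF2 : F (i + 1) = ((2 * N + 1).choose (N - i - 1) : ℝ) := by
          rw [hF]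
          simp only [if_pos (by omega : i + 1 ≤ N),
            show N - (i + 1) = N - i - 1 from by omega]
        rw [hF1, hF2]
        have c1 : ((2 * N + 2 : ℕ) : ℝ) * ((2 * N + 1).choose (N - i - 1) : ℝ) =
            ((2 * N + 2).choose (N - i) : ℝ) * ((N - i : ℕ) : ℝ) := by
          exact_mod_cast congrArg (Nat.cast : ℕ → ℝ) e1
        have c2 : ((2 * N + 1).choose (N - i) : ℝ) * ((2 * N + 2 : ℕ) : ℝ) =
            ((2 * N + 2).choose (N - i) : ℝ) * ((N + 2 + i : ℕ) : ℝ) := by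
          exact_mod_cast congrArg (Nat.cast : ℕ → ℝ) e2
        rw [Nat.cast_sub hiN.le] at c1
        push_cast at c1 c2 ⊢
        linear_combination (c1 - c2) / 2
      · -- i = N
        have hNi : N - i = 0 := by omega
        have hF1 : F i = ((2 * N + 1).choose 0 : ℝ) := by
          rw [hF]; simp only [if_pos (by omega : i ≤ N), hNi]
        have hF2 : F (i + 1) = 0 := by
          rw [hF]; simp only [if_neg (by omega : ¬ i + 1 ≤ N)]
        rw [hNi, hF1, hF2, Nat.choose_zero_right, Nat.choose_zero_right]
        have : (i : ℝ) = (N : ℝ) := by exact_mod_cast congrArg (Nat.cast : ℕ → ℝ) (by omega : i = N)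
        push_cast
        rw [this]
        ring
    rw [Finset.sum_congr rfl hterm, ← Finset.mul_sum, Finset.sum_range_sub' F (N + 1)]
    have hF0 : F 0 = ((2 * N + 1).choose N : ℝ) := by rw [hF]; simp
    have hFN : F (N + 1) = 0 := by rw [hF]; simp
    rw [hF0, hFN]
    have e3 : (2 * N + 2) * ((2 * N + 1).choose N) = (2 * N + 2).choose (N + 1) * (N + 1) := by
      have := Nat.add_one_mul_choose_eq (2 * N + 1) N
      simpa [Nat.succ_eq_add_one, show 2 * N + 1 + 1 = 2 * N + 2 from by omega] using this
    have c3 : ((2 * N + 2 : ℕ) : ℝ) * ((2 * N + 1).choose N : ℝ) =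
        ((2 * N + 2).choose (N + 1) : ℝ) * ((N + 1 : ℕ) : ℝ) := by
      exact_mod_cast congrArg (Nat.cast : ℕ → ℝ) e3
    rw [show 2 * (N + 1) = 2 * N + 2 from by ring]
    push_cast at c3 ⊢
    linear_combination c3 / 2

lemma A_rec (M n : ℕ) :
    ∑ k ∈ Finset.Icc 1 n, (((2 * n).choose (n - k) : ℝ)) * (k : ℝ) ^ (M + 2) =
      (n : ℝ) ^ 2 * ∑ k ∈ Finset.Icc 1 n, (((2 * n).choose (n - k) : ℝ)) * (k : ℝ) ^ M -
        2 * (n : ℝ) * (2 * (n : ℝ) - 1) *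
          ∑ k ∈ Finset.Icc 1 (n - 1), (((2 * (n - 1)).choose (n - 1 - k) : ℝ)) * (k : ℝ) ^ M := by
  rcases n with _ | N
  · simp
  · simp only [Nat.add_sub_cancel]
    rw [Finset.sum_Icc_succ_top (by omega : 1 ≤ N + 1),
        Finset.sum_Icc_succ_top (by omega : 1 ≤ N + 1)]
    have hsplit : ∀ k ∈ Finset.Icc 1 N,
        (((2 * (N + 1)).choose (N + 1 - k) : ℝ)) * (k : ℝ) ^ (M + 2) =
          ((N : ℝ) + 1) ^ 2 * ((((2 * (N + 1)).choose (N + 1 - k) : ℝ)) * (k : ℝ) ^ M) -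
            2 * ((N : ℝ) + 1) * (2 * (N : ℝ) + 1) * ((((2 * N).choose (N - k) : ℝ)) * (k : ℝ) ^ M) := by
      intro k hk
      rw [Finset.mem_Icc] at hk
      have hkey := key_real N k hk.2
      rw [show 2 * (N + 1) = 2 * N + 2 from by ring, pow_add]
      linear_combination ((k : ℝ) ^ M) * hkey
    rw [Finset.sum_congr rfl hsplit, Finset.sum_sub_distrib, ← Finset.mul_sum, ← Finset.mul_sum]
    rw [Nat.sub_self, Nat.choose_zero_right]
    push_cast
    ring

lemma Psum_zero (m : ℕ) :
    ∑ ℓ ∈ Finset.range (m + 1),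
      (-1 : ℝ) ^ ℓ * ffact 0 ℓ * ffact 0 (ℓ + 1) * csigma m ℓ 0 = 0 :=
  Finset.sum_eq_zero fun ℓ _ => by rw [ffact_zero_eq_zero]; ring


theorem A_odd_moment (m n : ℕ) :
    ∑ k ∈ Finset.Icc 1 n, (((2 * n).choose (n - k) : ℝ)) * (k : ℝ) ^ (1 + 2 * m) =
      (1 / 2) * (((2 * n).choose n : ℝ)) *
        ∑ ℓ ∈ Finset.range (m + 1),
          (-1 : ℝ) ^ ℓ * ffact (n : ℝ) ℓ * ffact (n : ℝ) (ℓ + 1) * csigma m ℓ (n : ℝ) := by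
  induction m generalizing n with
  | zero =>
    have hsum : ∑ ℓ ∈ Finset.range (0 + 1),
        (-1 : ℝ) ^ ℓ * ffact (n : ℝ) ℓ * ffact (n : ℝ) (ℓ + 1) * csigma 0 ℓ (n : ℝ) = (n : ℝ) := by
      rw [Finset.sum_range_one, csigma_self, ffact_one, ffact_zero']
      ring
    rw [hsum, show 1 + 2 * 0 = 1 from rfl]
    simp only [pow_one]
    exact base_case n
  | succ m ih =>
    rw [show 1 + 2 * (m + 1) = (1 + 2 * m) + 2 from by ring, A_rec (1 + 2 * m) n, ih n, ih (n - 1)]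
    rcases n with _ | N
    · -- n = 0
      norm_num
      exact Psum_zero (m + 1)
    · -- n = N + 1
      simp only [Nat.add_sub_cancel]
      have hP := P_rec m ((N : ℝ) + 1)
      simp only [pterm, shterm, add_sub_cancel_right] at hP
      have h0 := key_real N 0 (Nat.zero_le N)
      simp only [Nat.sub_zero, Nat.cast_zero] at h0
      rw [show 2 * (N + 1) = 2 * N + 2 from by ring]
      push_cast
      rw [show (m + 1 : ℕ) + 1 = m + 2 from rfl] at *
      linear_combination (-(1 / 2) : ℝ) * (((2 * N + 2).choose (N + 1) : ℝ)) * hP -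
        (1 / 2 : ℝ) * (∑ ℓ ∈ Finset.range (m + 1),
          (-1 : ℝ) ^ ℓ * ffact (N : ℝ) ℓ * ffact (N : ℝ) (ℓ + 1) * csigma m ℓ (N : ℝ)) * h0
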